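/- Let V be a finite-dimensional complex vector space and c₁, c₂ ∈ Λ²V a pair of bivectors admitting a decomposition into Kronecker blocks and trivial (one-dimensional zero) blocks with no Jordan blocks. Set μ = dim(ker c₁ ∩ ker c₂) and μ_λ = dim(ker c₁ ∩ ker c_λ) for c_λ = λ₁c₁ + λ₂c₂ with λ₁, λ₂ ≠ 0. Then μ = μ_λ for all such λ, and this common number equals the total dimension of the trivial Kronecker blocks in the decomposition. -/

import Mathlib

open Module LinearMap

/-- The (2n+1)-dimensional space of a Kronecker block (n = 0 gives the
one-dimensional trivial block). -/
abbrev KronV (n : ℕ) := (Fin n → ℂ) × (Fin (n + 1) → ℂ)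

noncomputable def wedgeMap {V : Type*} [AddCommGroup V] [Module ℂ V] (p q : V) :
    Module.Dual ℂ V →ₗ[ℂ] V :=
  (Module.Dual.eval ℂ V p).smulRight q - (Module.Dual.eval ℂ V q).smulRight p

noncomputable def kronP (n : ℕ) (i : Fin n) : KronV n := (Pi.single i 1, 0)

noncomputable def kronQ (n : ℕ) (j : Fin (n + 1)) : KronV n := (0, Pi.single j 1)

noncomputable def kronA1 (n : ℕ) : Module.Dual ℂ (KronV n) →ₗ[ℂ] KronV n :=
  ∑ i : Fin n, wedgeMap (kronP n i) (kronQ n i.castSucc)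

noncomputable def kronA2 (n : ℕ) : Module.Dual ℂ (KronV n) →ₗ[ℂ] KronV n :=
  ∑ i : Fin n, wedgeMap (kronP n i) (kronQ n i.succ)

/-- The direct sum over the blocks of the block bivectors A (a bivector on the
product space, as a skew map from the dual of the product). -/
noncomputable def blockSum (ι : Type*) [Fintype ι] [DecidableEq ι] (mdim : ι → ℕ)
    (A : (n : ℕ) → (Module.Dual ℂ (KronV n) →ₗ[ℂ] KronV n)) :
    Module.Dual ℂ ((i : ι) → KronV (mdim i)) →ₗ[ℂ] ((i : ι) → KronV (mdim i)) :=
  LinearMap.pi fun i =>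
    (A (mdim i)) ∘ₗ (LinearMap.single ℂ (fun i => KronV (mdim i)) i).dualMap

/-! ### Auxiliary lemmas -/

lemma kron_ker_pos (m : ℕ) :
    (ker (kronA1 (m+1)) ⊓ ker (kronA2 (m+1)) :
      Submodule ℂ (Module.Dual ℂ (KronV (m+1)))) = ⊥ := by
  rw [eq_bot_iff]
  rintro ξ ⟨h1, h2⟩
  rw [SetLike.mem_coe, mem_ker] at h1 h2
  have hp : ∀ i : Fin (m+1), ξ (kronP (m+1) i) = 0 := by
    intro i
    have h := congrFun (congrArg Prod.snd h1) i.castSucc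
    simpa [kronA1, wedgeMap, kronP, kronQ, Pi.single_apply, Fin.castSucc_inj,
      Prod.snd_sum, Prod.fst_sum, Finset.sum_apply] using h
  have hq1 : ∀ i : Fin (m+1), ξ (kronQ (m+1) i.castSucc) = 0 := by
    intro i
    have h := congrFun (congrArg Prod.fst h1) i
    simpa [kronA1, wedgeMap, kronP, kronQ, Pi.single_apply, Prod.snd_sum,
      Prod.fst_sum, Finset.sum_apply] using h
  have hq2 : ∀ i : Fin (m+1), ξ (kronQ (m+1) i.succ) = 0 := by
    intro i
    have h := congrFun (congrArg Prod.fst h2) i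
    simpa [kronA2, wedgeMap, kronP, kronQ, Pi.single_apply, Prod.snd_sum,
      Prod.fst_sum, Finset.sum_apply] using h
  have hq : ∀ j : Fin (m+2), ξ (kronQ (m+1) j) = 0 := by
    intro j
    rcases Fin.eq_castSucc_or_eq_last j with ⟨i, rfl⟩ | rfl
    · exact hq1 i
    · have := hq2 (Fin.last m)
      rwa [Fin.succ_last] at this
  simp only [Submodule.mem_bot]
  ext i
  · simpa [kronP] using hp i
  · simpa [kronQ] using hq i

lemma kron_ker_dim (n : ℕ) :
    finrank ℂ (ker (kronA1 n) ⊓ ker (kronA2 n) :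
      Submodule ℂ (Module.Dual ℂ (KronV n))) = if n = 0 then 1 else 0 := by
  cases n with
  | zero =>
    have h : (ker (kronA1 0) ⊓ ker (kronA2 0) :
        Submodule ℂ (Module.Dual ℂ (KronV 0))) = ⊤ := by
      simp [kronA1, kronA2]
    rw [h, finrank_top, Subspace.dual_finrank_eq]
    simp
  | succ m =>
    rw [kron_ker_pos]
    simp

/-- The submodule `Submodule.pi Set.univ p` is equivalent to the product of the `p i`. -/
noncomputable def piSubEquiv {ι : Type*} {φ : ι → Type*} [∀ i, AddCommGroup (φ i)]
    [∀ i, Module ℂ (φ i)] (p : ∀ i, Submodule ℂ (φ i)) :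
    (Submodule.pi Set.univ p : Submodule ℂ (∀ i, φ i)) ≃ₗ[ℂ] ∀ i, p i where
  toFun x i := ⟨x.1 i, x.2 i trivial⟩
  map_add' x y := rfl
  map_smul' c x := rfl
  invFun x := ⟨fun i => (x i).1, fun i _ => (x i).2⟩
  left_inv x := rfl
  right_inv x := rfl

lemma blockSum_ker (ι : Type*) [Fintype ι] [DecidableEq ι] (mdim : ι → ℕ)
    (A : (n : ℕ) → (Module.Dual ℂ (KronV n) →ₗ[ℂ] KronV n)) :
    ker (blockSum ι mdim A) =
      Submodule.comap
        ((LinearMap.lsum ℂ (fun i => KronV (mdim i)) ℂ).symm :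
          Module.Dual ℂ ((i : ι) → KronV (mdim i)) ≃ₗ[ℂ] _).toLinearMap
        (Submodule.pi Set.univ fun i => ker (A (mdim i))) := by
  ext ξ
  simp [blockSum, Submodule.mem_pi, mem_ker, LinearMap.pi_apply, funext_iff,
    LinearMap.dualMap_apply', Prod.ext_iff]

set_option maxHeartbeats 1000000 in
lemma blockSum_dim (ι : Type*) [Fintype ι] [DecidableEq ι] (mdim : ι → ℕ) :
    finrank ℂ (ker (blockSum ι mdim kronA1) ⊓ ker (blockSum ι mdim kronA2) :
        Submodule ℂ (Module.Dual ℂ ((i : ι) → KronV (mdim i))))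
      = (Finset.univ.filter fun i => mdim i = 0).card := by
  rw [blockSum_ker, blockSum_ker, ← Submodule.comap_inf]
  have hpi : (Submodule.pi Set.univ (fun i => ker (kronA1 (mdim i))) ⊓
      Submodule.pi Set.univ (fun i => ker (kronA2 (mdim i)))) =
      Submodule.pi Set.univ (fun i => ker (kronA1 (mdim i)) ⊓ ker (kronA2 (mdim i))) := by
    ext ξ
    simp [Submodule.mem_pi, forall_and]
  rw [hpi]
  rw [LinearEquiv.finrank_eq (LinearEquiv.ofSubmodule' _ _)]
  rw [LinearEquiv.finrank_eq (piSubEquiv (fun i => ker (kronA1 (mdim i)) ⊓ ker (kronA2 (mdim i))))]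
  rw [Module.finrank_pi_fintype]
  rw [Finset.card_filter]
  exact Finset.sum_congr rfl fun i _ => kron_ker_dim (mdim i)

theorem stmt5 (ι : Type*) [Fintype ι] [DecidableEq ι] (mdim : ι → ℕ)
    (V : Type*) [AddCommGroup V] [Module ℂ V]
    (e : V ≃ₗ[ℂ] ((i : ι) → KronV (mdim i)))
    (c₁ c₂ : Module.Dual ℂ V →ₗ[ℂ] V)
    (hc₁ : c₁ = e.symm.toLinearMap ∘ₗ (blockSum ι mdim kronA1) ∘ₗ
      e.symm.toLinearMap.dualMap)
    (hc₂ : c₂ = e.symm.toLinearMap ∘ₗ (blockSum ι mdim kronA2) ∘ₗ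
      e.symm.toLinearMap.dualMap)
    (l1 l2 : ℂ) (h1 : l1 ≠ 0) (h2 : l2 ≠ 0) :
    finrank ℂ ((LinearMap.ker c₁ ⊓ LinearMap.ker c₂ :
        Submodule ℂ (Module.Dual ℂ V)))
        = (Finset.univ.filter fun i => mdim i = 0).card ∧
    finrank ℂ ((LinearMap.ker c₁ ⊓ LinearMap.ker (l1 • c₁ + l2 • c₂) :
        Submodule ℂ (Module.Dual ℂ V)))
        = (Finset.univ.filter fun i => mdim i = 0).card := by
  have key : finrank ℂ ((LinearMap.ker c₁ ⊓ LinearMap.ker c₂ :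
      Submodule ℂ (Module.Dual ℂ V)))
      = (Finset.univ.filter fun i => mdim i = 0).card := by
    have hker : (LinearMap.ker c₁ ⊓ LinearMap.ker c₂ :
        Submodule ℂ (Module.Dual ℂ V)) =
        Submodule.comap (e.symm.dualMap :
            Module.Dual ℂ V ≃ₗ[ℂ] Module.Dual ℂ ((i : ι) → KronV (mdim i))).toLinearMap
          (ker (blockSum ι mdim kronA1) ⊓ ker (blockSum ι mdim kronA2)) := by
      ext ξ
      simp only [Submodule.mem_inf, mem_ker, Submodule.mem_comap, hc₁, hc₂,
        LinearMap.comp_apply, LinearEquiv.coe_coe]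
      rw [show (e.symm.dualMap : Module.Dual ℂ V ≃ₗ[ℂ] _) ξ
          = e.symm.toLinearMap.dualMap ξ from rfl]
      constructor
      · rintro ⟨ha, hb⟩
        exact ⟨by simpa using congrArg e ha, by simpa using congrArg e hb⟩
      · rintro ⟨ha, hb⟩
        exact ⟨by rw [ha]; simp, by rw [hb]; simp⟩
    rw [hker, LinearEquiv.finrank_eq (LinearEquiv.ofSubmodule' _ _), blockSum_dim]
  refine ⟨key, ?_⟩
  have h : (LinearMap.ker c₁ ⊓ LinearMap.ker (l1 • c₁ + l2 • c₂) :
      Submodule ℂ (Module.Dual ℂ V)) = LinearMap.ker c₁ ⊓ LinearMap.ker c₂ := by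
    ext ξ
    simp only [Submodule.mem_inf, mem_ker, LinearMap.add_apply, LinearMap.smul_apply]
    constructor
    · rintro ⟨ha, hb⟩
      rw [ha, smul_zero, zero_add, smul_eq_zero] at hb
      exact ⟨ha, hb.resolve_left h2⟩
    · rintro ⟨ha, hb⟩
      rw [ha, hb]
      simp
  rw [h, key]
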